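/- Let (X, μ) be a σ-finite measure space and A a sublinear operator defined on simple functions with values in measurable functions on another σ-finite measure space (Γ, ν). Suppose A is of weak type (p₁,p₁) with constant M₁ and of weak type (p₂,p₂) with constant M₂, where 1 ≤ p₁ < p₂ < ∞; i.e. ν{|Af| > y} ≤ (Mᵢ‖f‖_{pᵢ}/y)^{pᵢ} for all y > 0 and i = 1,2. Then for every p with p₁ < p < p₂, A is of strong type (p,p): ‖Af‖_{L^p(Γ,ν)} ≤ C·M₁^{1−θ}·M₂^{θ}·‖f‖_{L^p(X,μ)}, where 1/p = (1−θ)/p₁ + θ/p₂ and C depends only on p, p₁, p₂. -/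

import Mathlib

open MeasureTheory ENNReal

section MarcinkiewiczAux

open Set


lemma aux_lintegral_Ioo {r a : ℝ} (hr : -1 < r) (ha : 0 ≤ a) :
    ∫⁻ t in Set.Ioo 0 a, ENNReal.ofReal (t ^ r) = ENNReal.ofReal (a ^ (r+1) / (r+1)) := by
  rcases eq_or_lt_of_le ha with h|h
  · simp [← h, Real.zero_rpow (by linarith : r + 1 ≠ 0)]
  · have hint : IntegrableOn (fun t : ℝ => t ^ r) (Ioo 0 a) := by
      have := (intervalIntegral.intervalIntegrable_rpow' (a := 0) (b := a) hr).1
      exact this.mono_set Ioo_subset_Ioc_self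
    rw [← ofReal_integral_eq_lintegral_ofReal hint]
    · rw [← integral_Ioc_eq_integral_Ioo, ← intervalIntegral.integral_of_le ha,
        integral_rpow (Or.inl hr), Real.zero_rpow (by linarith : r + 1 ≠ 0), sub_zero]
    · filter_upwards [self_mem_ae_restrict measurableSet_Ioo] with t ht
      exact Real.rpow_nonneg ht.1.le r

lemma aux_lintegral_Ioi {r a : ℝ} (hr : r < -1) (ha : 0 < a) :
    ∫⁻ t in Set.Ioi a, ENNReal.ofReal (t ^ r) = ENNReal.ofReal (a ^ (r+1) / (-(r+1))) := by
  rw [← ofReal_integral_eq_lintegral_ofReal (integrableOn_Ioi_rpow_of_lt hr ha)]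
  · rw [integral_Ioi_rpow_of_lt hr ha]
    congr 1
    rw [div_neg, neg_div]
  · filter_upwards [self_mem_ae_restrict measurableSet_Ioi] with t ht
    exact Real.rpow_nonneg (ha.trans ht).le r

lemma aux_inner1 {σ p p₁ : ℝ} (hσ : 0 < σ) (hp₁ : 0 < p₁) (hp₁p : p₁ < p) (b : ℝ) (hb : 0 ≤ b) :
    ∫⁻ t in Set.Ioi (0:ℝ), ENNReal.ofReal (t ^ (p - 1 - p₁)) *
        (if σ * t < b then ENNReal.ofReal (b ^ p₁) else 0)
      = ENNReal.ofReal (σ ^ (p₁ - p) / (p - p₁)) * ENNReal.ofReal (b ^ p) := by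
  have hp : 0 < p := hp₁.trans hp₁p
  have hpp₁ : (0:ℝ) < p - p₁ := by linarith
  rcases eq_or_lt_of_le hb with h|hb0
  · have hzero : ∀ t ∈ Ioi (0:ℝ), ENNReal.ofReal (t ^ (p - 1 - p₁)) *
        (if σ * t < b then ENNReal.ofReal (b ^ p₁) else 0) = 0 := by
      intro t ht
      have : ¬ (σ * t < b) := by
        rw [← h]
        exact not_lt.2 (mul_nonneg hσ.le (le_of_lt ht))
      simp [this]
    rw [setLIntegral_congr_fun_ae measurableSet_Ioi (Filter.Eventually.of_forall hzero)]
    simp [← h, Real.zero_rpow hp.ne']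
  · have hbσ : 0 < b / σ := by positivity
    have hcond : ∀ t : ℝ, (σ * t < b) ↔ t ∈ Iio (b / σ) := by
      intro t
      rw [mem_Iio, lt_div_iff₀' hσ]
    have : ∀ t : ℝ, ENNReal.ofReal (t ^ (p - 1 - p₁)) *
        (if σ * t < b then ENNReal.ofReal (b ^ p₁) else 0) =
        (Iio (b / σ)).indicator (fun t => ENNReal.ofReal (t ^ (p - 1 - p₁)) *
          ENNReal.ofReal (b ^ p₁)) t := by
      intro t
      rw [Set.indicator_apply]
      by_cases h : σ * t < b
      · rw [if_pos h, if_pos ((hcond t).1 h)]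
      · rw [if_neg h, if_neg (fun hh => h ((hcond t).2 hh)), mul_zero]
    simp_rw [this]
    rw [lintegral_indicator measurableSet_Iio, Measure.restrict_restrict measurableSet_Iio,
      Set.inter_comm, Set.Ioi_inter_Iio, lintegral_mul_const' _ _ ofReal_ne_top,
      aux_lintegral_Ioo (by linarith) hbσ.le,
      show p - 1 - p₁ + 1 = p - p₁ by ring,
      ← ENNReal.ofReal_mul (div_nonneg (Real.rpow_nonneg hbσ.le _) hpp₁.le),
      ← ENNReal.ofReal_mul (div_nonneg (Real.rpow_nonneg hσ.le _) hpp₁.le)]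
    congr 1
    have hbp : b ^ (p - p₁) * b ^ p₁ = b ^ p := by
      rw [← Real.rpow_add hb0]
      ring_nf
    have hσe : σ ^ (p₁ - p) = (σ ^ (p - p₁))⁻¹ := by
      rw [show p₁ - p = -(p-p₁) by ring, Real.rpow_neg hσ.le]
    have hσp : (0:ℝ) < σ ^ (p - p₁) := Real.rpow_pos_of_pos hσ _
    rw [Real.div_rpow hb hσ.le, hσe]
    field_simp
    linear_combination hbp

lemma aux_inner2 {σ p p₂ : ℝ} (hσ : 0 < σ) (hp : 0 < p) (hpp₂ : p < p₂) (b : ℝ) (hb : 0 ≤ b) :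
    ∫⁻ t in Set.Ioi (0:ℝ), ENNReal.ofReal (t ^ (p - 1 - p₂)) *
        (if σ * t < b then 0 else ENNReal.ofReal (b ^ p₂))
      = ENNReal.ofReal (σ ^ (p₂ - p) / (p₂ - p)) * ENNReal.ofReal (b ^ p) := by
  have hp₂ : 0 < p₂ := hp.trans hpp₂
  have hpp : (0:ℝ) < p₂ - p := by linarith
  rcases eq_or_lt_of_le hb with h|hb0
  · have hzero : ∀ t ∈ Ioi (0:ℝ), ENNReal.ofReal (t ^ (p - 1 - p₂)) *
        (if σ * t < b then 0 else ENNReal.ofReal (b ^ p₂)) = 0 := by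
      intro t ht
      by_cases hc : σ * t < b
      · simp [hc]
      · simp [hc, ← h, Real.zero_rpow hp₂.ne']
    rw [setLIntegral_congr_fun_ae measurableSet_Ioi (Filter.Eventually.of_forall hzero)]
    simp [← h, Real.zero_rpow hp.ne']
  · have hbσ : 0 < b / σ := by positivity
    have hcond : ∀ t : ℝ, (¬ (σ * t < b)) ↔ t ∈ Ici (b / σ) := by
      intro t
      rw [mem_Ici, not_lt, div_le_iff₀' hσ]
    have : ∀ t : ℝ, ENNReal.ofReal (t ^ (p - 1 - p₂)) *
        (if σ * t < b then 0 else ENNReal.ofReal (b ^ p₂)) =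
        (Ici (b / σ)).indicator (fun t => ENNReal.ofReal (t ^ (p - 1 - p₂)) *
          ENNReal.ofReal (b ^ p₂)) t := by
      intro t
      rw [Set.indicator_apply]
      by_cases h : σ * t < b
      · rw [if_pos h, if_neg (fun hh => (hcond t).2 hh h), mul_zero]
      · rw [if_neg h, if_pos ((hcond t).1 h)]
    simp_rw [this]
    rw [lintegral_indicator measurableSet_Ici, Measure.restrict_restrict measurableSet_Ici,
      Set.inter_eq_left.2 (fun t (ht : t ∈ Ici (b/σ)) => mem_Ioi.2 (lt_of_lt_of_le hbσ ht)),
      Measure.restrict_congr_set Ioi_ae_eq_Ici.symm,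
      lintegral_mul_const' _ _ ofReal_ne_top,
      aux_lintegral_Ioi (by linarith) hbσ,
      show p - 1 - p₂ + 1 = p - p₂ by ring, show -(p - p₂) = p₂ - p by ring,
      ← ENNReal.ofReal_mul (div_nonneg (Real.rpow_nonneg hbσ.le _) hpp.le),
      ← ENNReal.ofReal_mul (div_nonneg (Real.rpow_nonneg hσ.le _) hpp.le)]
    congr 1
    have hbp : b ^ (p - p₂) * b ^ p₂ = b ^ p := by
      rw [← Real.rpow_add hb0]
      ring_nf
    have hσe : σ ^ (p₂ - p) = (σ ^ (p - p₂))⁻¹ := by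
      rw [show p₂ - p = -(p-p₂) by ring, Real.rpow_neg hσ.le]
    have hσp : (0:ℝ) < σ ^ (p - p₂) := Real.rpow_pos_of_pos hσ _
    rw [Real.div_rpow hb hσ.le, hσe]
    field_simp
    linear_combination hbp



lemma aux_layercake {β : Type} [MeasurableSpace β] (ν : Measure β) (G : β → ℂ) {p : ℝ}
    (hp : 0 < p) :
    ∫⁻ x, (‖G x‖₊ : ℝ≥0∞) ^ p ∂ν ≤
      ENNReal.ofReal p * ∫⁻ t in Set.Ioi (0:ℝ), ν {x | t < ‖G x‖} * ENNReal.ofReal (t ^ (p-1)) := by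
  obtain ⟨g, gmeas, gle, geq⟩ := exists_measurable_le_lintegral_eq ν
    (fun x => (‖G x‖₊ : ℝ≥0∞) ^ p)
  have hgtop : ∀ x, g x ≠ ⊤ := fun x =>
    ne_top_of_le_ne_top (ENNReal.rpow_lt_top_of_nonneg hp.le ENNReal.coe_ne_top).ne (gle x)
  set r : β → ℝ := fun x => (g x).toReal ^ (1/p) with hr
  have hrm : AEMeasurable r ν := (gmeas.ennreal_toReal.pow_const _).aemeasurable
  have hrnn : 0 ≤ᵐ[ν] r := Filter.Eventually.of_forall fun x =>
    Real.rpow_nonneg ENNReal.toReal_nonneg _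
  have key : ∀ x, ENNReal.ofReal (r x ^ p) = g x := by
    intro x
    rw [hr]
    simp only
    rw [← Real.rpow_mul ENNReal.toReal_nonneg, one_div_mul_cancel hp.ne', Real.rpow_one,
      ENNReal.ofReal_toReal (hgtop x)]
  have hsub : ∀ t : ℝ, {x | t < r x} ⊆ {x | t < ‖G x‖} := by
    intro t x hx
    have h1 : r x ≤ ‖G x‖ := by
      have h2 : (g x).toReal ≤ ‖G x‖ ^ p := by
        have := ENNReal.toReal_mono (ENNReal.rpow_lt_top_of_nonneg hp.le ENNReal.coe_ne_top).ne
          (gle x)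
        rwa [← ENNReal.toReal_rpow, ENNReal.coe_toReal, coe_nnnorm] at this
      calc r x ≤ (‖G x‖ ^ p) ^ (1/p) :=
            Real.rpow_le_rpow ENNReal.toReal_nonneg h2 (by positivity)
        _ = ‖G x‖ := by
            rw [← Real.rpow_mul (norm_nonneg _), mul_one_div_cancel hp.ne', Real.rpow_one]
    exact lt_of_lt_of_le hx h1
  calc ∫⁻ x, (‖G x‖₊ : ℝ≥0∞) ^ p ∂ν = ∫⁻ x, g x ∂ν := geq
    _ = ∫⁻ x, ENNReal.ofReal (r x ^ p) ∂ν := by simp_rw [key]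
    _ = ENNReal.ofReal p * ∫⁻ t in Set.Ioi (0:ℝ), ν {x | t < r x} * ENNReal.ofReal (t ^ (p-1)) :=
        lintegral_rpow_eq_lintegral_meas_lt_mul ν hrnn hrm hp
    _ ≤ _ := by
        refine mul_le_mul_right (lintegral_mono fun t => ?_) _
        exact mul_le_mul_left (measure_mono (hsub t)) _


lemma aux_rpow_exp (s a : ℝ) : Real.exp s ^ a = Real.exp (s * a) := by
  rw [Real.rpow_def_of_pos (Real.exp_pos s), Real.log_exp]

lemma aux_const (p₁ p₂ p θ : ℝ) (hp₁ : 0 < p₁) (hp₁p : p₁ < p) (hpp₂ : p < p₂)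
    (hpθ : 1/p = (1-θ)/p₁ + θ/p₂) {M₁ M₂ : ℝ} (hM₁ : 0 < M₁) (hM₂ : 0 < M₂) :
    (2*M₁) ^ p₁ * (Real.exp ((p₁ * Real.log (2*M₁) - p₂ * Real.log (2*M₂)) / (p₂ - p₁)))
        ^ (p₁ - p) = 2 ^ p * (M₁ ^ (1-θ) * M₂ ^ θ) ^ p ∧
    (2*M₂) ^ p₂ * (Real.exp ((p₁ * Real.log (2*M₁) - p₂ * Real.log (2*M₂)) / (p₂ - p₁)))
        ^ (p₂ - p) = 2 ^ p * (M₁ ^ (1-θ) * M₂ ^ θ) ^ p := by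
  have hp : 0 < p := hp₁.trans hp₁p
  have hp₂ : 0 < p₂ := hp.trans hpp₂
  have h21 : p₂ - p₁ ≠ 0 := by linarith
  have hpθ' : p₁ * p₂ = p * ((1-θ) * p₂ + θ * p₁) := by
    field_simp at hpθ
    linarith [hpθ]
  have hRHS : 2 ^ p * (M₁ ^ (1-θ) * M₂ ^ θ) ^ p =
      Real.exp (Real.log 2 * p + (Real.log M₁ * (1-θ) + Real.log M₂ * θ) * p) := by
    rw [Real.rpow_def_of_pos two_pos, Real.rpow_def_of_pos (by positivity),
      Real.log_mul (by positivity) (by positivity),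
      Real.log_rpow hM₁, Real.log_rpow hM₂, ← Real.exp_add]
    ring_nf
  constructor
  · rw [hRHS, Real.rpow_def_of_pos (by positivity : (0:ℝ) < 2*M₁), aux_rpow_exp, ← Real.exp_add,
      Real.exp_eq_exp]
    rw [Real.log_mul two_ne_zero hM₁.ne', Real.log_mul two_ne_zero hM₂.ne']
    field_simp
    linear_combination (Real.log M₁ - Real.log M₂) * hpθ'
  · rw [hRHS, Real.rpow_def_of_pos (by positivity : (0:ℝ) < 2*M₂), aux_rpow_exp, ← Real.exp_add,
      Real.exp_eq_exp]
    rw [Real.log_mul two_ne_zero hM₁.ne', Real.log_mul two_ne_zero hM₂.ne']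
    field_simp
    linear_combination (Real.log M₁ - Real.log M₂) * hpθ'

end MarcinkiewiczAux

/-- Marcinkiewicz interpolation theorem: a sublinear operator `A`, defined on simple
functions on a σ-finite measure space `(α, μ)` with values in measurable functions on a
σ-finite measure space `(β, ν)`, which is of weak type `(p₁,p₁)` with constant `M₁` and of
weak type `(p₂,p₂)` with constant `M₂` (`1 ≤ p₁ < p < p₂ < ∞`), is of strong type `(p,p)`
with constant `C·M₁^{1−θ}·M₂^θ` where `1/p = (1−θ)/p₁ + θ/p₂` and `C = C(p,p₁,p₂)`. -/

theorem marcinkiewicz_interpolation (p₁ p₂ p θ : ℝ) (hp₁ : 1 ≤ p₁) (hp₁p : p₁ < p)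
    (hpp₂ : p < p₂) (hθ0 : 0 < θ) (hθ1 : θ < 1) (hpθ : 1 / p = (1 - θ) / p₁ + θ / p₂) :
    ∃ C > (0 : ℝ), ∀ {α β : Type} [MeasurableSpace α] [MeasurableSpace β]
      (μ : Measure α) (ν : Measure β), SigmaFinite μ → SigmaFinite ν →
      ∀ (A : SimpleFunc α ℂ → β → ℂ),
      (∀ f g : SimpleFunc α ℂ, ∀ x, ‖A (f + g) x‖ ≤ ‖A f x‖ + ‖A g x‖) →
      (∀ (c : ℂ) (f : SimpleFunc α ℂ) (x), ‖A (c • f) x‖ = ‖c‖ * ‖A f x‖) →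
      ∀ (M₁ M₂ : ℝ), 0 < M₁ → 0 < M₂ →
      (∀ (f : SimpleFunc α ℂ) (y : ℝ), 0 < y →
        ν {x | y < ‖A f x‖} ≤
          (ENNReal.ofReal (M₁ / y) * eLpNorm (⇑f) (ENNReal.ofReal p₁) μ) ^ p₁) →
      (∀ (f : SimpleFunc α ℂ) (y : ℝ), 0 < y →
        ν {x | y < ‖A f x‖} ≤
          (ENNReal.ofReal (M₂ / y) * eLpNorm (⇑f) (ENNReal.ofReal p₂) μ) ^ p₂) →
      ∀ f : SimpleFunc α ℂ,
        eLpNorm (A f) (ENNReal.ofReal p) ν ≤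
          ENNReal.ofReal (C * M₁ ^ (1 - θ) * M₂ ^ θ) *
            eLpNorm (⇑f) (ENNReal.ofReal p) μ := by
  have hp₁0 : 0 < p₁ := lt_of_lt_of_le zero_lt_one hp₁
  have hp0 : 0 < p := hp₁0.trans hp₁p
  have hp₂0 : 0 < p₂ := hp0.trans hpp₂
  have hpp₁ : (0:ℝ) < p - p₁ := by linarith
  have hp₂p : (0:ℝ) < p₂ - p := by linarith
  refine ⟨2 * (p * (1/(p-p₁) + 1/(p₂-p))) ^ (1/p), by positivity, ?_⟩
  set Cc : ℝ := 2 * (p * (1/(p-p₁) + 1/(p₂-p))) ^ (1/p) with hCc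
  intro α β mα mβ μ ν hμ hν A hsub _hhom M₁ M₂ hM₁ hM₂ hw₁ hw₂ f
  set σ : ℝ := Real.exp ((p₁ * Real.log (2*M₁) - p₂ * Real.log (2*M₂)) / (p₂ - p₁)) with hσdef
  have hσ : 0 < σ := Real.exp_pos _
  obtain ⟨hE₁, hE₂⟩ := aux_const p₁ p₂ p θ hp₁0 hp₁p hpp₂ hpθ hM₁ hM₂
  set CM : ℝ := M₁ ^ (1-θ) * M₂ ^ θ with hCM
  have hCM0 : 0 < CM := by positivity
  set I : ℝ≥0∞ := ∫⁻ x, ENNReal.ofReal (‖f x‖ ^ p) ∂μ with hI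
  -- step 2 : pointwise distribution bound
  have step2 : ∀ t : ℝ, 0 < t → ν {x | t < ‖A f x‖} ≤
      ENNReal.ofReal ((2*M₁/t)^p₁) *
        (∫⁻ x, (if σ*t < ‖f x‖ then ENNReal.ofReal (‖f x‖^p₁) else 0) ∂μ)
      + ENNReal.ofReal ((2*M₂/t)^p₂) *
        (∫⁻ x, (if σ*t < ‖f x‖ then 0 else ENNReal.ofReal (‖f x‖^p₂)) ∂μ) := by
    intro t ht
    have hs : MeasurableSet {x : α | σ*t < ‖f x‖} :=
      measurableSet_lt measurable_const f.measurable.norm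
    set f₁ := SimpleFunc.piecewise {x : α | σ*t < ‖f x‖} hs f 0 with hf₁def
    set f₂ := SimpleFunc.piecewise {x : α | σ*t < ‖f x‖}ᶜ hs.compl f 0 with hf₂def
    have hfsum : f₁ + f₂ = f := by
      apply SimpleFunc.coe_injective
      funext x
      simp only [SimpleFunc.coe_add, Pi.add_apply]
      rw [hf₁def, hf₂def, SimpleFunc.piecewise_apply, SimpleFunc.piecewise_apply]
      by_cases hx : x ∈ {x : α | σ*t < ‖f x‖}
      · rw [if_pos hx, if_neg (show x ∉ {x : α | σ*t < ‖f x‖}ᶜ from fun h => h hx),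
          SimpleFunc.coe_zero, Pi.zero_apply, add_zero]
      · rw [if_neg hx, if_pos (show x ∈ {x : α | σ*t < ‖f x‖}ᶜ from hx),
          SimpleFunc.coe_zero, Pi.zero_apply, zero_add]
    have hv₁ : ∀ x, (‖f₁ x‖₊ : ℝ≥0∞) ^ p₁ =
        (if σ*t < ‖f x‖ then ENNReal.ofReal (‖f x‖^p₁) else 0) := by
      intro x
      rw [hf₁def, SimpleFunc.piecewise_apply]
      by_cases hx : σ*t < ‖f x‖
      · rw [if_pos (show x ∈ {x : α | σ*t < ‖f x‖} from hx), if_pos hx,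
          ← enorm_eq_nnnorm, ← ofReal_norm, ENNReal.ofReal_rpow_of_nonneg (norm_nonneg _) hp₁0.le]
      · rw [if_neg (show x ∉ {x : α | σ*t < ‖f x‖} from hx), if_neg hx,
          SimpleFunc.coe_zero, Pi.zero_apply,
          nnnorm_zero, ENNReal.coe_zero, ENNReal.zero_rpow_of_pos hp₁0]
    have hv₂ : ∀ x, (‖f₂ x‖₊ : ℝ≥0∞) ^ p₂ =
        (if σ*t < ‖f x‖ then 0 else ENNReal.ofReal (‖f x‖^p₂)) := by
      intro x
      rw [hf₂def, SimpleFunc.piecewise_apply]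
      by_cases hx : σ*t < ‖f x‖
      · rw [if_neg (show x ∉ {x : α | σ*t < ‖f x‖}ᶜ from fun h => h hx), if_pos hx,
          SimpleFunc.coe_zero, Pi.zero_apply,
          nnnorm_zero, ENNReal.coe_zero, ENNReal.zero_rpow_of_pos hp₂0]
      · rw [if_pos (show x ∈ {x : α | σ*t < ‖f x‖}ᶜ from hx), if_neg hx,
          ← enorm_eq_nnnorm, ← ofReal_norm, ENNReal.ofReal_rpow_of_nonneg (norm_nonneg _) hp₂0.le]
    have w1 := hw₁ f₁ (t/2) (half_pos ht)
    have w2 := hw₂ f₂ (t/2) (half_pos ht)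
    rw [eLpNorm_eq_lintegral_rpow_enorm_toReal (ENNReal.ofReal_pos.2 hp₁0).ne' ofReal_ne_top,
      toReal_ofReal hp₁0.le, ENNReal.mul_rpow_of_nonneg _ _ hp₁0.le, ← ENNReal.rpow_mul,
      one_div_mul_cancel hp₁0.ne', ENNReal.rpow_one,
      ENNReal.ofReal_rpow_of_pos (by positivity),
      show M₁/(t/2) = 2*M₁/t by field_simp] at w1
    rw [eLpNorm_eq_lintegral_rpow_enorm_toReal (ENNReal.ofReal_pos.2 hp₂0).ne' ofReal_ne_top,
      toReal_ofReal hp₂0.le, ENNReal.mul_rpow_of_nonneg _ _ hp₂0.le, ← ENNReal.rpow_mul,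
      one_div_mul_cancel hp₂0.ne', ENNReal.rpow_one,
      ENNReal.ofReal_rpow_of_pos (by positivity),
      show M₂/(t/2) = 2*M₂/t by field_simp] at w2
    simp_rw [enorm_eq_nnnorm, hv₁] at w1
    simp_rw [enorm_eq_nnnorm, hv₂] at w2
    calc ν {x | t < ‖A f x‖}
        ≤ ν ({x | t/2 < ‖A f₁ x‖} ∪ {x | t/2 < ‖A f₂ x‖}) := by
          apply measure_mono
          intro x hx
          have hxx : t < ‖A f x‖ := hx
          have hsx := hsub f₁ f₂ x
          rw [hfsum] at hsx
          by_cases h1 : t/2 < ‖A f₁ x‖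
          · exact Set.mem_union_left _ h1
          · refine Set.mem_union_right _ ?_
            have : t/2 < ‖A f₂ x‖ := by
              push_neg at h1
              linarith
            exact this
      _ ≤ ν {x | t/2 < ‖A f₁ x‖} + ν {x | t/2 < ‖A f₂ x‖} := measure_union_le _ _
      _ ≤ _ := add_le_add w1 w2
  rw [← hσdef] at hE₁ hE₂
  -- measurability of product integrands
  have hms : MeasurableSet {z : ℝ × α | σ * z.1 < ‖f z.2‖} :=
    measurableSet_lt (measurable_fst.const_mul σ) (f.measurable.norm.comp measurable_snd)
  have hmble₁ : Measurable (Function.uncurry fun (t:ℝ) (x:α) =>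
      ENNReal.ofReal (t^(p-1-p₁)) * (if σ*t < ‖f x‖ then ENNReal.ofReal (‖f x‖^p₁) else 0)) := by
    have : (Function.uncurry fun (t:ℝ) (x:α) =>
        ENNReal.ofReal (t^(p-1-p₁)) * (if σ*t < ‖f x‖ then ENNReal.ofReal (‖f x‖^p₁) else 0))
        = fun z : ℝ × α =>
        ENNReal.ofReal (z.1^(p-1-p₁)) * (if σ*z.1 < ‖f z.2‖ then ENNReal.ofReal (‖f z.2‖^p₁) else 0) :=
      rfl
    rw [this]
    exact ((measurable_fst.pow_const _).ennreal_ofReal).mul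
      (Measurable.ite hms ((((f.measurable.norm.pow_const _)).ennreal_ofReal).comp measurable_snd)
        measurable_const)
  have hmble₂ : Measurable (Function.uncurry fun (t:ℝ) (x:α) =>
      ENNReal.ofReal (t^(p-1-p₂)) * (if σ*t < ‖f x‖ then 0 else ENNReal.ofReal (‖f x‖^p₂))) := by
    have : (Function.uncurry fun (t:ℝ) (x:α) =>
        ENNReal.ofReal (t^(p-1-p₂)) * (if σ*t < ‖f x‖ then 0 else ENNReal.ofReal (‖f x‖^p₂)))
        = fun z : ℝ × α =>
        ENNReal.ofReal (z.1^(p-1-p₂)) * (if σ*z.1 < ‖f z.2‖ then 0 else ENNReal.ofReal (‖f z.2‖^p₂)) :=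
      rfl
    rw [this]
    exact ((measurable_fst.pow_const _).ennreal_ofReal).mul
      (Measurable.ite hms measurable_const
        ((((f.measurable.norm.pow_const _)).ennreal_ofReal).comp measurable_snd))
  -- Tonelli computations
  have comp₁ : (∫⁻ (t:ℝ) in Set.Ioi 0, ∫⁻ x, ENNReal.ofReal (t^(p-1-p₁)) *
      (if σ*t < ‖f x‖ then ENNReal.ofReal (‖f x‖^p₁) else 0) ∂μ)
      = ENNReal.ofReal (σ ^ (p₁ - p) / (p - p₁)) * I := by
    rw [lintegral_lintegral_swap hmble₁.aemeasurable]
    have : ∀ x : α, (∫⁻ (t:ℝ) in Set.Ioi 0, ENNReal.ofReal (t^(p-1-p₁)) *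
        (if σ*t < ‖f x‖ then ENNReal.ofReal (‖f x‖^p₁) else 0))
        = ENNReal.ofReal (σ ^ (p₁ - p) / (p - p₁)) * ENNReal.ofReal (‖f x‖ ^ p) :=
      fun x => aux_inner1 hσ hp₁0 hp₁p _ (norm_nonneg _)
    simp_rw [this]
    rw [hI, lintegral_const_mul' _ _ ofReal_ne_top]
  have comp₂ : (∫⁻ (t:ℝ) in Set.Ioi 0, ∫⁻ x, ENNReal.ofReal (t^(p-1-p₂)) *
      (if σ*t < ‖f x‖ then 0 else ENNReal.ofReal (‖f x‖^p₂)) ∂μ)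
      = ENNReal.ofReal (σ ^ (p₂ - p) / (p₂ - p)) * I := by
    rw [lintegral_lintegral_swap hmble₂.aemeasurable]
    have : ∀ x : α, (∫⁻ (t:ℝ) in Set.Ioi 0, ENNReal.ofReal (t^(p-1-p₂)) *
        (if σ*t < ‖f x‖ then 0 else ENNReal.ofReal (‖f x‖^p₂)))
        = ENNReal.ofReal (σ ^ (p₂ - p) / (p₂ - p)) * ENNReal.ofReal (‖f x‖ ^ p) :=
      fun x => aux_inner2 hσ hp0 hpp₂ _ (norm_nonneg _)
    simp_rw [this]
    rw [hI, lintegral_const_mul' _ _ ofReal_ne_top]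
  -- step 3 : per-t bound with constants separated
  have step3 : ∀ t : ℝ, 0 < t → ν {x | t < ‖A f x‖} * ENNReal.ofReal (t^(p-1)) ≤
      ENNReal.ofReal ((2*M₁)^p₁) * ∫⁻ x, ENNReal.ofReal (t^(p-1-p₁)) *
        (if σ*t < ‖f x‖ then ENNReal.ofReal (‖f x‖^p₁) else 0) ∂μ
      + ENNReal.ofReal ((2*M₂)^p₂) * ∫⁻ x, ENNReal.ofReal (t^(p-1-p₂)) *
        (if σ*t < ‖f x‖ then 0 else ENNReal.ofReal (‖f x‖^p₂)) ∂μ := by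
    intro t ht
    have hr₁ : (2*M₁/t)^p₁ * t^(p-1) = (2*M₁)^p₁ * t^(p-1-p₁) := by
      rw [Real.div_rpow (by positivity) ht.le, div_mul_eq_mul_div, mul_div_assoc,
        ← Real.rpow_sub ht]
    have hr₂ : (2*M₂/t)^p₂ * t^(p-1) = (2*M₂)^p₂ * t^(p-1-p₂) := by
      rw [Real.div_rpow (by positivity) ht.le, div_mul_eq_mul_div, mul_div_assoc,
        ← Real.rpow_sub ht]
    calc ν {x | t < ‖A f x‖} * ENNReal.ofReal (t^(p-1))
        ≤ (ENNReal.ofReal ((2*M₁/t)^p₁) *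
            (∫⁻ x, (if σ*t < ‖f x‖ then ENNReal.ofReal (‖f x‖^p₁) else 0) ∂μ)
          + ENNReal.ofReal ((2*M₂/t)^p₂) *
            (∫⁻ x, (if σ*t < ‖f x‖ then 0 else ENNReal.ofReal (‖f x‖^p₂)) ∂μ))
            * ENNReal.ofReal (t^(p-1)) := mul_le_mul_left (step2 t ht) _
      _ = _ := by
          rw [add_mul, mul_right_comm, mul_right_comm (ENNReal.ofReal ((2*M₂/t)^p₂)),
            ← ENNReal.ofReal_mul (Real.rpow_nonneg (div_nonneg (by positivity) ht.le) _),
            ← ENNReal.ofReal_mul (Real.rpow_nonneg (div_nonneg (by positivity) ht.le) _),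
            hr₁, hr₂,
            ENNReal.ofReal_mul (Real.rpow_nonneg (by positivity) _),
            ENNReal.ofReal_mul (Real.rpow_nonneg (by positivity) _),
            mul_assoc, mul_assoc]
          congr 1
          · congr 1
            exact (lintegral_const_mul' _ _ ofReal_ne_top).symm
          · congr 1
            exact (lintegral_const_mul' _ _ ofReal_ne_top).symm
  -- main estimate
  have hG₁ : Measurable fun t : ℝ => ENNReal.ofReal ((2*M₁)^p₁) * ∫⁻ x,
      ENNReal.ofReal (t^(p-1-p₁)) *
        (if σ*t < ‖f x‖ then ENNReal.ofReal (‖f x‖^p₁) else 0) ∂μ :=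
    (hmble₁.lintegral_prod_right').const_mul _
  have main : ∫⁻ x, (‖A f x‖₊ : ℝ≥0∞) ^ p ∂ν ≤ ENNReal.ofReal ((Cc * CM)^p) * I := by
    have hDC : p * ((2*M₁)^p₁ * (σ^(p₁-p) / (p-p₁)) + (2*M₂)^p₂ * (σ^(p₂-p) / (p₂-p)))
        = (Cc*CM)^p := by
      have h1 : (2*M₁)^p₁ * (σ^(p₁-p) / (p-p₁)) = (2^p * CM^p) / (p-p₁) := by
        rw [← hE₁]; ring
      have h2 : (2*M₂)^p₂ * (σ^(p₂-p) / (p₂-p)) = (2^p * CM^p) / (p₂-p) := by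
        rw [← hE₂]; ring
      have hX0 : (0:ℝ) < p * (1/(p-p₁) + 1/(p₂-p)) :=
        mul_pos hp0 (add_pos (one_div_pos.2 hpp₁) (one_div_pos.2 hp₂p))
      have hCcp : Cc ^ p = 2^p * (p * (1/(p-p₁) + 1/(p₂-p))) := by
        rw [hCc, Real.mul_rpow (by norm_num) (Real.rpow_nonneg hX0.le _),
          ← Real.rpow_mul hX0.le, one_div_mul_cancel hp0.ne', Real.rpow_one]
      rw [Real.mul_rpow (by positivity) hCM0.le, hCcp, h1, h2]
      field_simp
    calc ∫⁻ x, (‖A f x‖₊ : ℝ≥0∞) ^ p ∂ν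
        ≤ ENNReal.ofReal p * ∫⁻ t in Set.Ioi (0:ℝ),
            ν {x | t < ‖A f x‖} * ENNReal.ofReal (t ^ (p-1)) := aux_layercake ν (A f) hp0
      _ ≤ ENNReal.ofReal p * ∫⁻ t in Set.Ioi (0:ℝ),
            (ENNReal.ofReal ((2*M₁)^p₁) * ∫⁻ x, ENNReal.ofReal (t^(p-1-p₁)) *
              (if σ*t < ‖f x‖ then ENNReal.ofReal (‖f x‖^p₁) else 0) ∂μ
            + ENNReal.ofReal ((2*M₂)^p₂) * ∫⁻ x, ENNReal.ofReal (t^(p-1-p₂)) *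
              (if σ*t < ‖f x‖ then 0 else ENNReal.ofReal (‖f x‖^p₂)) ∂μ) := by
          refine mul_le_mul_right (lintegral_mono_ae ?_) _
          filter_upwards [self_mem_ae_restrict measurableSet_Ioi] with t ht
          exact step3 t ht
      _ = ENNReal.ofReal p *
            (ENNReal.ofReal ((2*M₁)^p₁) * (ENNReal.ofReal (σ^(p₁-p) / (p-p₁)) * I)
            + ENNReal.ofReal ((2*M₂)^p₂) * (ENNReal.ofReal (σ^(p₂-p) / (p₂-p)) * I)) := by
          rw [lintegral_add_left hG₁, lintegral_const_mul' _ _ ofReal_ne_top,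
            lintegral_const_mul' _ _ ofReal_ne_top, comp₁, comp₂]
      _ = ENNReal.ofReal ((Cc*CM)^p) * I := by
          rw [← mul_assoc (ENNReal.ofReal ((2*M₁)^p₁)),
            ← mul_assoc (ENNReal.ofReal ((2*M₂)^p₂)),
            ← ENNReal.ofReal_mul (by positivity), ← ENNReal.ofReal_mul (by positivity),
            ← add_mul, ← ENNReal.ofReal_add (by positivity) (by positivity),
            ← mul_assoc, ← ENNReal.ofReal_mul hp0.le, hDC]
  -- conclude
  rw [eLpNorm_eq_lintegral_rpow_enorm_toReal (ENNReal.ofReal_pos.2 hp0).ne' ofReal_ne_top,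
    toReal_ofReal hp0.le,
    eLpNorm_eq_lintegral_rpow_enorm_toReal (ENNReal.ofReal_pos.2 hp0).ne' ofReal_ne_top,
    toReal_ofReal hp0.le]
  simp only [enorm_eq_nnnorm]
  have hIeq : (∫⁻ x, (‖f x‖₊ : ℝ≥0∞) ^ p ∂μ) = I :=
    lintegral_congr fun x => by
      rw [← enorm_eq_nnnorm, ← ofReal_norm, ENNReal.ofReal_rpow_of_nonneg (norm_nonneg _) hp0.le]
  rw [hIeq]
  calc (∫⁻ x, (‖A f x‖₊ : ℝ≥0∞) ^ p ∂ν) ^ (1/p)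
      ≤ (ENNReal.ofReal ((Cc*CM)^p) * I) ^ (1/p) := ENNReal.rpow_le_rpow main (by positivity)
    _ = ENNReal.ofReal (Cc * M₁ ^ (1-θ) * M₂ ^ θ) * I ^ (1/p) := by
        rw [ENNReal.mul_rpow_of_nonneg _ _ (by positivity),
          ENNReal.ofReal_rpow_of_pos (by positivity),
          ← Real.rpow_mul (by positivity), mul_one_div_cancel hp0.ne', Real.rpow_one, hCM,
          ← mul_assoc]
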